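/- Let g ≥ 1 be an integer, let e_1, …, e_{2g+2} be complex numbers, and let f(x) = ∏_{m=1}^{2g+2} (x − e_m). For every x ∈ ℂ with f(x) ≠ 0, the sum over all (g+1)-element subsets S of {1, …, 2g+2} satisfies ∑_S ( ∑_{i∈S} 1/(x − e_i) )² = C(2g+1, g) · ( (2g+1) f′(x)² − (g+1) f(x) f″(x) ) / ( (2g+1) f(x)² ). -/

import Mathlib

set_option maxHeartbeats 1000000


open Finset

lemma aux_card_filter {α : Type*} [Fintype α] [DecidableEq α] (T : Finset α) (k : ℕ)
    (hk : T.card ≤ k) :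
    ((Finset.powersetCard k (Finset.univ : Finset α)).filter fun S => T ⊆ S).card
      = (Fintype.card α - T.card).choose (k - T.card) := by
  have key : ((Finset.powersetCard k (Finset.univ : Finset α)).filter fun S => T ⊆ S).card
      = (Finset.powersetCard (k - T.card) (Finset.univ \ T)).card := by
    apply Finset.card_bij (fun S _ => S \ T)
    · intro S hS
      simp only [mem_filter, mem_powersetCard] at hS
      rw [mem_powersetCard]
      exact ⟨sdiff_subset_sdiff hS.1.1 le_rfl, by rw [card_sdiff_of_subset hS.2, hS.1.2]⟩
    · intro S1 h1 S2 h2 h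
      simp only [mem_filter, mem_powersetCard] at h1 h2
      rw [← sdiff_union_of_subset h1.2, ← sdiff_union_of_subset h2.2, h]
    · intro R hR
      rw [mem_powersetCard] at hR
      obtain ⟨hRs, hRc⟩ := hR
      rw [Finset.subset_sdiff] at hRs
      refine ⟨R ∪ T, ?_, ?_⟩
      · simp only [mem_filter, mem_powersetCard]
        refine ⟨⟨subset_univ _, ?_⟩, subset_union_right⟩
        rw [card_union_of_disjoint hRs.2, hRc]
        omega
      · rw [union_sdiff_right, sdiff_eq_self_of_disjoint hRs.2]
  rw [key, card_powersetCard, card_sdiff_of_subset (subset_univ T), card_univ]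

/-- For `f(x) = ∏_{m=1}^{2g+2} (x - e_m)` and `f x ≠ 0`, the sum over all
`(g+1)`-element subsets `S` of `(∑_{i ∈ S} 1/(x - e_i))²` equals
`C(2g+1, g) · ((2g+1) f'(x)² − (g+1) f(x) f''(x)) / ((2g+1) f(x)²)`. -/
theorem sum_over_subsets_of_partial_fractions_sq
    (g : ℕ) (hg : 1 ≤ g) (e : Fin (2 * g + 2) → ℂ)
    (f : ℂ → ℂ) (hf : f = fun x => ∏ m, (x - e m))
    (x : ℂ) (hx : f x ≠ 0) :
    ∑ S ∈ Finset.powersetCard (g + 1) (Finset.univ : Finset (Fin (2 * g + 2))),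
        (∑ i ∈ S, 1 / (x - e i)) ^ 2
      = (Nat.choose (2 * g + 1) g : ℂ) *
          ((2 * (g : ℂ) + 1) * (deriv f x) ^ 2 - ((g : ℂ) + 1) * f x * deriv (deriv f) x) /
          ((2 * (g : ℂ) + 1) * (f x) ^ 2) := by
  classical
  set a : Fin (2 * g + 2) → ℂ := fun i => (x - e i)⁻¹ with ha
  have hne : ∀ m, x - e m ≠ 0 := by
    intro m hm
    exact hx (by rw [hf]; exact Finset.prod_eq_zero (mem_univ m) hm)
  set A : ℂ := ∑ i, a i with hA
  set B : ℂ := ∑ i, (a i) ^ 2 with hB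
  set N : ℕ := Nat.choose (2 * g + 1) g with hN
  set M : ℕ := Nat.choose (2 * g) (g - 1) with hM
  -- derivative of products
  have hprod : ∀ (u : Finset (Fin (2 * g + 2))) (y : ℂ),
      HasDerivAt (fun y => ∏ m ∈ u, (y - e m)) (∑ i ∈ u, ∏ j ∈ u.erase i, (y - e j)) y := by
    intro u y
    have h := HasDerivAt.fun_finsetProd (u := u) (f := fun m y => y - e m)
      (f' := fun _ => 1) (x := y) (fun i _ => (hasDerivAt_id y).sub_const (e i))
    simpa using h
  have hd1 : deriv f = fun y => ∑ i, ∏ j ∈ (Finset.univ.erase i), (y - e j) := by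
    funext y
    rw [hf]
    exact (hprod Finset.univ y).deriv
  have hd2 : deriv (deriv f) x
      = ∑ i, ∑ j ∈ Finset.univ.erase i, ∏ m ∈ (Finset.univ.erase i).erase j, (x - e m) := by
    rw [hd1]
    exact (HasDerivAt.fun_sum fun i _ => hprod (Finset.univ.erase i) x).deriv
  -- evaluations of erased products
  have hP1 : ∀ i, ∏ j ∈ Finset.univ.erase i, (x - e j) = f x * a i := by
    intro i
    have h := Finset.mul_prod_erase Finset.univ (fun m => x - e m) (mem_univ i)
    rw [hf]
    simp only
    rw [← h, ha]
    field_simp [hne i]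
  have hP2 : ∀ i, ∀ j ∈ Finset.univ.erase i,
      ∏ m ∈ (Finset.univ.erase i).erase j, (x - e m) = f x * a i * a j := by
    intro i j hj
    have h := Finset.mul_prod_erase (Finset.univ.erase i) (fun m => x - e m) hj
    have h2 := Finset.mul_prod_erase Finset.univ (fun m => x - e m) (mem_univ i)
    rw [hf]
    simp only
    rw [← h2, ← h, ha]
    field_simp [hne i, hne j]
  have herase : ∀ i, ∑ j ∈ Finset.univ.erase i, a j = A - a i := fun i =>
    Finset.sum_erase_eq_sub (mem_univ i)
  have hsum : ∑ i, a i * (A - a i) = A ^ 2 - B := by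
    rw [hA, hB]
    rw [Finset.sum_congr rfl (g := fun i => a i * ∑ k, a k - a i ^ 2) (fun i _ => by ring)]
    rw [Finset.sum_sub_distrib, ← Finset.sum_mul, sq]
  -- first derivative value
  have hd1x : deriv f x = f x * A := by
    rw [hd1]
    simp only
    rw [Finset.sum_congr rfl fun i _ => hP1 i, ← Finset.mul_sum, hA]
  -- second derivative value
  have hd2x : deriv (deriv f) x = f x * (A ^ 2 - B) := by
    rw [hd2, Finset.sum_congr rfl fun i _ => Finset.sum_congr rfl (hP2 i)]
    have : ∀ i : Fin (2 * g + 2), ∑ j ∈ Finset.univ.erase i, f x * a i * a j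
        = f x * (a i * (A - a i)) := by
      intro i
      rw [← Finset.mul_sum, herase i]
      ring
    rw [Finset.sum_congr rfl fun i _ => this i, ← Finset.mul_sum, hsum]
  -- counting
  set P := Finset.powersetCard (g + 1) (Finset.univ : Finset (Fin (2 * g + 2))) with hP
  have hcard1 : ∀ i : Fin (2 * g + 2), (P.filter fun S => i ∈ S ∧ i ∈ S).card = N := by
    intro i
    have : (P.filter fun S => i ∈ S ∧ i ∈ S) = P.filter fun S => {i} ⊆ S := by
      apply Finset.filter_congr
      intro S _
      simp
    rw [this, hP, aux_card_filter {i} (g + 1) (by simp)]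
    simp only [card_singleton, Fintype.card_fin]
    rw [hN]
    congr 1 <;> omega
  have hcard2 : ∀ i j : Fin (2 * g + 2), j ≠ i →
      (P.filter fun S => i ∈ S ∧ j ∈ S).card = M := by
    intro i j hij
    have : (P.filter fun S => i ∈ S ∧ j ∈ S) = P.filter fun S => ({i, j} : Finset _) ⊆ S := by
      apply Finset.filter_congr
      intro S _
      simp [Finset.insert_subset_iff]
    rw [this, hP, aux_card_filter {i, j} (g + 1)
      (by rw [card_insert_of_notMem (by simp [hij.symm]), card_singleton]; omega)]
    rw [card_insert_of_notMem (by simp [hij.symm]), card_singleton, Fintype.card_fin]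
    rw [hM]
    congr 1 <;> omega
  -- rewrite LHS
  have hLHS : ∑ S ∈ P, (∑ i ∈ S, 1 / (x - e i)) ^ 2
      = (N : ℂ) * B + (M : ℂ) * (A ^ 2 - B) := by
    have hins : ∀ S : Finset (Fin (2 * g + 2)), (∑ i ∈ S, 1 / (x - e i))
        = ∑ i, if i ∈ S then a i else 0 := by
      intro S
      rw [Finset.sum_ite_mem, Finset.univ_inter]
      exact Finset.sum_congr rfl fun i _ => (one_div _)
    calc ∑ S ∈ P, (∑ i ∈ S, 1 / (x - e i)) ^ 2
        = ∑ S ∈ P, ∑ i, ∑ j, (if i ∈ S then a i else 0) * (if j ∈ S then a j else 0) := by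
          refine Finset.sum_congr rfl fun S _ => ?_
          rw [hins S, sq, Finset.sum_mul_sum]
      _ = ∑ i, ∑ j, ∑ S ∈ P, (if i ∈ S then a i else 0) * (if j ∈ S then a j else 0) := by
          rw [Finset.sum_comm]
          exact Finset.sum_congr rfl fun i _ => Finset.sum_comm
      _ = ∑ i, ∑ j, ((P.filter fun S => i ∈ S ∧ j ∈ S).card : ℂ) * (a i * a j) := by
          refine Finset.sum_congr rfl fun i _ => Finset.sum_congr rfl fun j _ => ?_
          rw [Finset.sum_congr rfl (fun S _ => show
              (if i ∈ S then a i else 0) * (if j ∈ S then a j else 0)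
                = if i ∈ S ∧ j ∈ S then a i * a j else 0 by
            by_cases h1 : i ∈ S <;> by_cases h2 : j ∈ S <;> simp [h1, h2])]
          rw [Finset.sum_ite, Finset.sum_const, Finset.sum_const_zero, add_zero,
            nsmul_eq_mul]
      _ = ∑ i, ((N : ℂ) * (a i * a i) + ∑ j ∈ Finset.univ.erase i,
            (M : ℂ) * (a i * a j)) := by
          refine Finset.sum_congr rfl fun i _ => ?_
          rw [← Finset.add_sum_erase _ _ (mem_univ i), hcard1 i]
          congr 1
          refine Finset.sum_congr rfl fun j hj => ?_
          rw [hcard2 i j (Finset.ne_of_mem_erase hj)]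
      _ = (N : ℂ) * B + (M : ℂ) * (A ^ 2 - B) := by
          rw [Finset.sum_add_distrib, ← Finset.mul_sum]
          congr 1
          · rw [hB]; congr 1; exact Finset.sum_congr rfl fun i _ => (sq (a i)).symm
          · have : ∀ i : Fin (2 * g + 2), ∑ j ∈ Finset.univ.erase i, (M : ℂ) * (a i * a j)
                = (M : ℂ) * (a i * (A - a i)) := by
              intro i
              rw [← Finset.mul_sum, ← Finset.mul_sum, herase i]
            rw [Finset.sum_congr rfl fun i _ => this i, ← Finset.mul_sum, hsum]
  -- the binomial identity
  have hnat : (2 * g + 1) * M = N * g := by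
    have h := Nat.add_one_mul_choose_eq (2 * g) (g - 1)
    have hgg : g - 1 + 1 = g := by omega
    rw [hgg] at h
    rw [hM, hN]
    simpa [Nat.succ_eq_add_one] using h
  have hcast : (2 * (g : ℂ) + 1) * (M : ℂ) = (N : ℂ) * (g : ℂ) := by
    have h2 : ((2 * g + 1 : ℕ) : ℂ) * (M : ℂ) = (N : ℂ) * (g : ℂ) := by exact_mod_cast hnat
    push_cast at h2
    exact h2
  -- finish
  rw [hLHS, hd1x, hd2x]
  have hden : (2 * (g : ℂ) + 1) * (f x) ^ 2 ≠ 0 := by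
    apply mul_ne_zero _ (pow_ne_zero _ hx)
    have : ((2 * g + 1 : ℕ) : ℂ) ≠ 0 := Nat.cast_ne_zero.mpr (by omega)
    push_cast at this
    convert this using 1
  rw [eq_div_iff hden]
  rw [hN]
  linear_combination (f x ^ 2 * (A ^ 2 - B)) * hcast
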